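/- Let p, q be nonnegative integers with q ≥ 1. Then the ratio A_{p,q}(i,j)/A_{p,q-1}(i,j) tends to infinity as both i and j tend to infinity: for every real number M there exist I and J such that A_{p,q}(i,j)/A_{p,q-1}(i,j) > M whenever i ≥ I and j ≥ J. -/
import Mathlib


/-- The generalized Eulerian number `eulerA p q i j` counts the paths in the Euler graph
from `(p, q)` to `(p + i, q + j)`.  It is defined by the initial conditions
`eulerA p q i 0 = (q+1)^i`, `eulerA p q 0 j = (p+1)^j` and the recurrence
`eulerA p q i j = (j+q+1) * eulerA p q (i-1) j + (i+p+1) * eulerA p q i (j-1)`. -/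
def eulerA (p q : ℕ) : ℕ → ℕ → ℕ
  | i, 0 => (q + 1) ^ i
  | 0, j + 1 => (p + 1) ^ (j + 1)
  | i + 1, j + 1 =>
      (j + 1 + q + 1) * eulerA p q i (j + 1) + (i + 1 + p + 1) * eulerA p q (i + 1) j

lemma eulerA_pos (p q : ℕ) : ∀ i j, 0 < eulerA p q i j
  | i, 0 => by simp [eulerA]
  | 0, j + 1 => by simp [eulerA]
  | i + 1, j + 1 => by
      have h1 := eulerA_pos p q i (j + 1)
      simp only [eulerA]
      exact Nat.lt_of_lt_of_le (Nat.mul_pos (by omega) h1) (Nat.le_add_right _ _)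

lemma eulerA_key (p t : ℕ) : ∀ i j : ℕ,
    (p + t + 2) * eulerA p (t + 1) (i + 1) j
      = (p + t + 3 + i) * eulerA p t (i + 1) j + (j + 1) * eulerA p t i (j + 1)
  | 0, 0 => by simp [eulerA]; ring
  | 0, j + 1 => by
      have IH := eulerA_key p t 0 j
      simp only [eulerA] at IH ⊢
      zify at IH ⊢
      linear_combination (p + 2 : ℤ) * IH
  | i + 1, 0 => by
      have IH := eulerA_key p t i 0
      simp only [eulerA] at IH ⊢
      zify at IH ⊢
      linear_combination (t + 2 : ℤ) * IH
  | i + 1, j + 1 => by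
      have IH1 := eulerA_key p t i (j + 1)
      have IH2 := eulerA_key p t (i + 1) j
      simp only [eulerA] at IH1 IH2 ⊢
      zify at IH1 IH2 ⊢
      linear_combination (j + t + 3 : ℤ) * IH1 + (i + p + 3 : ℤ) * IH2

lemma eulerA_lower (p t : ℕ) (i j : ℕ) :
    (p + t + 2 + i) * eulerA p t i j ≤ (p + t + 2) * eulerA p (t + 1) i j := by
  cases i with
  | zero =>
      cases j with
      | zero => simp [eulerA]
      | succ j => simp [eulerA]
  | succ i =>
      rw [eulerA_key p t i j]
      have : p + t + 2 + (i + 1) = p + t + 3 + i := by omega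
      rw [this]
      exact Nat.le_add_right _ _

theorem stmt9 (p q : ℕ) (hq : 1 ≤ q) :
    ∀ M : ℝ, ∃ I J : ℕ, ∀ i j : ℕ, I ≤ i → J ≤ j →
      M < (eulerA p q i j : ℝ) / (eulerA p (q - 1) i j) := by
  obtain ⟨t, rfl⟩ : ∃ t, q = t + 1 := ⟨q - 1, (Nat.succ_pred_eq_of_pos hq).symm⟩
  intro M
  refine ⟨(p + t + 2) * (⌈M⌉₊ + 1), 0, fun i j hi _ => ?_⟩
  simp only [Nat.add_sub_cancel]
  have hA' : (0 : ℝ) < eulerA p t i j := by exact_mod_cast eulerA_pos p t i j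
  have hkey : ((p + t + 2 + i : ℕ) * eulerA p t i j : ℝ)
      ≤ ((p + t + 2 : ℕ) * eulerA p (t + 1) i j : ℝ) := by
    exact_mod_cast eulerA_lower p t i j
  have hs0 : (0 : ℝ) < (p + t + 2 : ℕ) := by positivity
  have h1 : M < ((p + t + 2 + i : ℕ) : ℝ) / ((p + t + 2 : ℕ) : ℝ) := by
    rw [lt_div_iff₀ hs0]
    have hM : M ≤ (⌈M⌉₊ : ℝ) := Nat.le_ceil M
    have hi' : ((p + t + 2) * (⌈M⌉₊ + 1) : ℝ) ≤ (i : ℕ) := by exact_mod_cast hi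
    have hcast : ((p + t + 2 + i : ℕ) : ℝ) = (p + t + 2 : ℕ) + i := by push_cast; ring
    rw [hcast]
    push_cast at hi' ⊢
    nlinarith [hs0, hM, hi']
  calc M < ((p + t + 2 + i : ℕ) : ℝ) / ((p + t + 2 : ℕ) : ℝ) := h1
    _ ≤ (eulerA p (t + 1) i j : ℝ) / (eulerA p t i j : ℝ) := by
        rw [div_le_div_iff₀ hs0 hA']
        nlinarith [hkey]
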